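/- Counting-function asymptotics for the explicit model: if n(λ) := M_{ν(λ)-1} where ν(λ) := #{k ∈ ℤ_{≥0} : b c^{2k+d} > λ} and M_k := C(d+k-1,d-1)+C(d+k-2,d-1), then lim_{λ↓0} |ln λ|^{-(d-1)}·n(λ) = 2^{-d+2} / ((d-1)!·|ln c|^{d-1}). -/

import Mathlib

open Filter Finset Real


private lemma asc_prod (m r : ℕ) :
    ((m+1).ascFactorial r : ℝ) = ∏ i ∈ Finset.range r, ((m : ℝ) + 1 + i) := by
  induction r with
  | zero => simp
  | succ r ih => rw [Nat.ascFactorial_succ, Finset.prod_range_succ, ← ih]; push_cast; ring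

private lemma tendsto_choose (r : ℕ) :
    Tendsto (fun m : ℕ => ((m + r).choose r : ℝ) / (m:ℝ) ^ r) atTop
      (nhds (1 / r.factorial)) := by
  have hlim : Tendsto (fun m : ℕ => ∏ i ∈ Finset.range r, (((m:ℝ) + 1 + i)/m)) atTop
      (nhds 1) := by
    have h2 : Tendsto (fun m : ℕ => ∏ i ∈ Finset.range r, (((m:ℝ) + 1 + i)/m)) atTop
        (nhds (∏ _i ∈ Finset.range r, (1:ℝ))) := by
      apply tendsto_finset_prod
      intro i _
      have he : (fun m : ℕ => ((m:ℝ) + 1 + i)/m) =ᶠ[atTop] fun m => 1 + (1+(i:ℝ)) * (m:ℝ)⁻¹ := by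
        filter_upwards [eventually_gt_atTop 0] with m hm
        have : (m:ℝ) ≠ 0 := by positivity
        field_simp
        ring
      have h3 := tendsto_inv_atTop_zero.comp (tendsto_natCast_atTop_atTop (R := ℝ))
      have h4 := (h3.const_mul ((1:ℝ)+i)).const_add 1
      apply Tendsto.congr' he.symm
      simpa using h4
    simpa using h2
  have h1 := hlim.div_const (r.factorial : ℝ)
  rw [one_div] at h1 ⊢
  apply h1.congr'
  filter_upwards [eventually_gt_atTop 0] with m hm
  have hm0 : (m:ℝ) ≠ 0 := by positivity
  have key : ((m+1).ascFactorial r : ℝ) = (r.factorial : ℝ) * ((m + r).choose r : ℝ) := by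
    exact_mod_cast congrArg (Nat.cast (R := ℝ)) (Nat.ascFactorial_eq_factorial_mul_choose m r)
  have hp : ∏ i ∈ Finset.range r, (((m:ℝ)+1+i)/m)
      = ((m + r).choose r : ℝ) * r.factorial / (m:ℝ)^r := by
    rw [Finset.prod_div_distrib, Finset.prod_const, ← asc_prod, key, Finset.card_range]
    ring
  rw [hp]
  have hf : (r.factorial : ℝ) ≠ 0 := by positivity
  field_simp

private lemma tendsto_choose_shift (r j : ℕ) :
    Tendsto (fun m : ℕ => (((m - j) + r).choose r : ℝ) / (m:ℝ) ^ r) atTop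
      (nhds (1 / r.factorial)) := by
  have hsub : Tendsto (fun m : ℕ => m - j) atTop atTop := tendsto_sub_atTop_nat j
  have h1 : Tendsto (fun m : ℕ => (((m - j) + r).choose r : ℝ) / ((m - j : ℕ):ℝ) ^ r) atTop
      (nhds (1 / r.factorial)) := (tendsto_choose r).comp hsub
  have h2 : Tendsto (fun m : ℕ => (((m - j : ℕ):ℝ) / (m:ℝ)) ^ r) atTop (nhds 1) := by
    have hb : Tendsto (fun m : ℕ => ((m - j : ℕ):ℝ) / (m:ℝ)) atTop (nhds 1) := by
      have he : (fun m : ℕ => ((m - j : ℕ):ℝ) / (m:ℝ)) =ᶠ[atTop]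
          fun m => 1 - (j:ℝ) * (m:ℝ)⁻¹ := by
        filter_upwards [eventually_ge_atTop (j+1)] with m hm
        have hmj : (j:ℝ) ≤ (m:ℝ) := by exact_mod_cast Nat.le_of_succ_le hm
        have hm0 : (m:ℝ) ≠ 0 := Nat.cast_ne_zero.2 (by omega)
        rw [Nat.cast_sub (Nat.le_of_succ_le hm)]
        field_simp
      have h3 := tendsto_inv_atTop_zero.comp (tendsto_natCast_atTop_atTop (R := ℝ))
      have h4 := ((h3.const_mul (j:ℝ)).const_sub 1)
      apply Tendsto.congr' he.symm
      simpa using h4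
    simpa using hb.pow r
  have := h1.mul h2
  rw [mul_one] at this
  apply this.congr'
  filter_upwards [eventually_ge_atTop (j+1)] with m hm
  have hm0 : (m:ℝ) ≠ 0 := Nat.cast_ne_zero.2 (by omega)
  have hmj0 : ((m - j : ℕ):ℝ) ≠ 0 := by
    have : 0 < m - j := by omega
    positivity
  field_simp
  rw [div_pow, mul_assoc, div_mul_cancel₀ _ (pow_ne_zero _ hm0)]


private lemma tendstoM (d : ℕ) (hd : 2 ≤ d) (M : ℕ → ℕ)
    (hM : ∀ k, M k = Nat.choose (d + k - 1) (d - 1) + Nat.choose (d + k - 2) (d - 1)) :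
    Tendsto (fun m : ℕ => (M (m-1) : ℝ) / (m:ℝ) ^ (d-1)) atTop
      (nhds (2 / (d-1).factorial)) := by
  have h1 := tendsto_choose_shift (d-1) 1
  have h2 := tendsto_choose_shift (d-1) 2
  have h := h1.add h2
  have h2' : (1:ℝ) / (d-1).factorial + 1 / (d-1).factorial = 2 / (d-1).factorial := by ring
  rw [h2'] at h
  apply h.congr'
  filter_upwards [eventually_ge_atTop 2] with m hm
  have e1 : d + (m-1) - 1 = (m - 1) + (d - 1) := by omega
  have e2 : d + (m-1) - 2 = (m - 2) + (d - 1) := by omega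
  rw [hM, e1, e2]
  push_cast
  ring

/-- for `n(λ) = M_{ν(λ)-1}` with `ν(λ) = #{k : b c^{2k+d} > λ}`,
`lim_{λ↓0} |ln λ|^{-(d-1)} n(λ) = 2^{2-d}/((d-1)! |ln c|^{d-1})`. -/
theorem stmt16 (d : ℕ) (hd : 2 ≤ d) (b c : ℝ) (hb : 0 < b) (hc : c ∈ Set.Ioo (0 : ℝ) 1)
    (ν : ℝ → ℕ) (hν : ∀ t : ℝ, ν t = Nat.card {k : ℕ | t < b * c ^ (2 * k + d)})
    (M : ℕ → ℕ)
    (hM : ∀ k, M k = Nat.choose (d + k - 1) (d - 1) + Nat.choose (d + k - 2) (d - 1))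
    (n : ℝ → ℕ) (hn : ∀ t : ℝ, n t = if ν t = 0 then 0 else M (ν t - 1)) :
    Filter.Tendsto (fun t : ℝ => (n t : ℝ) / |Real.log t| ^ (d - 1))
      (nhdsWithin 0 (Set.Ioi 0))
      (nhds ((2 : ℝ) ^ ((2 : ℤ) - (d : ℤ)) /
        (((d - 1).factorial : ℝ) * |Real.log c| ^ (d - 1)))) := by
  obtain ⟨hc0, hc1⟩ := hc
  have hlogc : Real.log c < 0 := Real.log_neg hc0 hc1
  set ℓ : ℝ := -Real.log c with hℓdef
  have hl : 0 < ℓ := by simp [hℓdef]; linarith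
  set K : ℝ := Real.log b + d * Real.log c with hKdef
  set A : ℝ → ℝ := fun t => (K - Real.log t) / (2 * ℓ) with hAdef
  -- formula for ν
  have hnu : ∀ t : ℝ, 0 < t → ν t = ⌈A t⌉₊ := by
    intro t ht
    rw [hν]
    have hset : {k : ℕ | t < b * c ^ (2 * k + d)} = Set.Iio ⌈A t⌉₊ := by
      ext k
      simp only [Set.mem_setOf_eq, Set.mem_Iio, Nat.lt_ceil]
      have hpow : (0:ℝ) < b * c ^ (2 * k + d) := by positivity
      rw [← Real.log_lt_log_iff ht hpow]
      rw [Real.log_mul (ne_of_gt hb) (pow_ne_zero _ (ne_of_gt hc0)), Real.log_pow]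
      rw [hAdef]
      simp only [lt_div_iff₀ (by positivity : (0:ℝ) < 2 * ℓ)]
      rw [hKdef, hℓdef]
      push_cast
      constructor <;> intro h <;> nlinarith
    rw [hset, Nat.card_eq_fintype_card, Fintype.card_ofFinset]
    simp
    intro x; simp
  -- A tends to atTop
  have hA_top : Tendsto A (nhdsWithin 0 (Set.Ioi 0)) atTop := by
    have h1 : Tendsto (fun t : ℝ => K - Real.log t) (nhdsWithin 0 (Set.Ioi 0)) atTop := by
      have := Real.tendsto_log_nhdsGT_zero
      exact tendsto_atTop_add_const_left _ K (tendsto_neg_atBot_atTop.comp this)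
    exact h1.atTop_div_const (by positivity)
  -- ν tends to atTop
  have hν_top : Tendsto ν (nhdsWithin 0 (Set.Ioi 0)) atTop := by
    rw [tendsto_atTop]
    intro N
    filter_upwards [self_mem_nhdsWithin, hA_top.eventually_ge_atTop (N:ℝ)] with t ht hA
    rw [hnu t ht]
    exact_mod_cast le_trans hA (Nat.le_ceil _)
  -- ratio limit
  have hmem : Set.Ioo (0:ℝ) 1 ∈ nhdsWithin (0:ℝ) (Set.Ioi 0) :=
    Ioo_mem_nhdsGT_of_mem (by simp : (0:ℝ) ∈ Set.Ico (0:ℝ) 1)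
  set g : ℝ → ℝ := fun t => -Real.log t with hgdef
  have hg_top : Tendsto g (nhdsWithin 0 (Set.Ioi 0)) atTop :=
    tendsto_neg_atBot_atTop.comp Real.tendsto_log_nhdsGT_zero
  have hginv : Tendsto (fun t => (g t)⁻¹) (nhdsWithin 0 (Set.Ioi 0)) (nhds 0) :=
    tendsto_inv_atTop_zero.comp hg_top
  have hlo : Tendsto (fun t => (K/(2*ℓ)) * (g t)⁻¹ + 1/(2*ℓ)) (nhdsWithin 0 (Set.Ioi 0))
      (nhds (1/(2*ℓ))) := by
    have := (hginv.const_mul (K/(2*ℓ))).add_const (1/(2*ℓ))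
    simpa using this
  have hhi : Tendsto (fun t => ((K/(2*ℓ)) * (g t)⁻¹ + 1/(2*ℓ)) + (g t)⁻¹)
      (nhdsWithin 0 (Set.Ioi 0)) (nhds (1/(2*ℓ))) := by
    have := hlo.add hginv
    simpa using this
  have habs : ∀ t ∈ Set.Ioo (0:ℝ) 1, |Real.log t| = g t := by
    intro t ht
    exact abs_of_neg (Real.log_neg ht.1 ht.2)
  have hratio : Tendsto (fun t => (ν t : ℝ) / |Real.log t|) (nhdsWithin 0 (Set.Ioi 0))
      (nhds (1/(2*ℓ))) := by
    apply tendsto_of_tendsto_of_tendsto_of_le_of_le' hlo hhi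
    · filter_upwards [hmem, hA_top.eventually_ge_atTop 1] with t ht hA1
      have hg0 : 0 < g t := by
        rw [hgdef]; simp; exact Real.log_neg ht.1 ht.2
      have hAlow : A t ≤ ν t := by rw [hnu t ht.1]; exact_mod_cast Nat.le_ceil _
      have hloeq : (K/(2*ℓ)) * (g t)⁻¹ + 1/(2*ℓ) = A t / g t := by
        simp only [hAdef]
        have : K - Real.log t = K + g t := by rw [hgdef]; ring
        rw [this]
        field_simp
      rw [hloeq, habs t ht]
      exact div_le_div_of_nonneg_right hAlow hg0.le
    · filter_upwards [hmem, hA_top.eventually_ge_atTop 1] with t ht hA1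
      have hg0 : 0 < g t := by
        rw [hgdef]; simp; exact Real.log_neg ht.1 ht.2
      have hAhigh : (ν t : ℝ) ≤ A t + 1 := by
        rw [hnu t ht.1]
        exact (Nat.ceil_lt_add_one (by linarith)).le
      have hhieq : ((K/(2*ℓ)) * (g t)⁻¹ + 1/(2*ℓ)) + (g t)⁻¹ = (A t + 1) / g t := by
        simp only [hAdef]
        have : K - Real.log t = K + g t := by rw [hgdef]; ring
        rw [this]
        field_simp
      rw [hhieq, habs t ht]
      exact div_le_div_of_nonneg_right hAhigh hg0.le
  -- assemble
  have F1 : Tendsto (fun t => (M (ν t - 1) : ℝ) / (ν t : ℝ) ^ (d-1))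
      (nhdsWithin 0 (Set.Ioi 0)) (nhds (2 / (d-1).factorial)) :=
    (tendstoM d hd M hM).comp hν_top
  have F2 : Tendsto (fun t => ((ν t : ℝ) / |Real.log t|) ^ (d-1))
      (nhdsWithin 0 (Set.Ioi 0)) (nhds ((1/(2*ℓ)) ^ (d-1))) := hratio.pow _
  have F := F1.mul F2
  have hval : (2 : ℝ) ^ ((2 : ℤ) - (d : ℤ)) /
      (((d - 1).factorial : ℝ) * |Real.log c| ^ (d - 1))
      = (2 / (d-1).factorial) * ((1/(2*ℓ)) ^ (d-1)) := by
    have habsc : |Real.log c| = ℓ := abs_of_neg hlogc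
    rw [habsc]
    have h2 : (2:ℝ) ^ ((2 : ℤ) - (d : ℤ)) = 2^2 / 2^(d:ℕ) := by
      rw [zpow_sub₀ (by norm_num : (2:ℝ) ≠ 0), zpow_natCast]
      norm_num
    rw [h2]
    have hdd : d = (d-1) + 1 := by omega
    rw [hdd, pow_succ]
    have hf0 : ((d-1).factorial : ℝ) ≠ 0 := by positivity
    have hℓ0 : ℓ ≠ 0 := ne_of_gt hl
    field_simp
    rw [Nat.add_sub_cancel, div_pow, one_pow, mul_pow, pow_succ]
    field_simp
  rw [hval]
  apply F.congr'
  filter_upwards [hmem, hν_top.eventually_ge_atTop 1] with t ht hν1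
  have hg0 : 0 < |Real.log t| := by
    rw [habs t ht]
    simp [hgdef]; exact Real.log_neg ht.1 ht.2
  have hν0 : (0:ℝ) < (ν t : ℝ) := by exact_mod_cast Nat.lt_of_lt_of_le Nat.zero_lt_one hν1
  rw [hn]
  rw [if_neg (by omega)]
  rw [div_pow]
  field_simp
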